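/- arXiv:1805.02093 — 4 statements merged into one kernel-verified Lean document; each statement's English description precedes it below -/
import Mathlib

section
/- Let (P_n) be strongly invariant for the system (A) and let h, k be growth rates. The pair (A,P) is (h,k)-dichotomic if and only if there exists a nondecreasing sequence s : ℕ → [1,∞) such that h_m‖A_m^n P_n x‖ ≤ s_n h_n‖x‖ and k_m‖B_m^n Q_m x‖ ≤ s_m k_n‖x‖ for all m ≥ n and all x ∈ X. -/
open ContinuousLinearMap Filter

noncomputable section

variable {X : Type*} [NormedAddCommGroup X] [NormedSpace ℝ X]

/-- The evolution operator `A_m^n` associated to the linear difference system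
`x_{n+1} = A_n x_n`: `A_m^n = A_{m-1} ⋯ A_n` for `m > n` and `A_n^n = I`. -/
def evol (A : ℕ → X →L[ℝ] X) : ℕ → ℕ → X →L[ℝ] X
  | 0, _ => 1
  | m + 1, n => if m + 1 ≤ n then 1 else A m ∘L evol A m n

/-- `P` is a projectors sequence. -/
def ProjSeq (P : ℕ → X →L[ℝ] X) : Prop := ∀ n, P n ∘L P n = P n

/-- The projectors sequence `P` is invariant for the system `(A)`. -/
def InvariantFor (A P : ℕ → X →L[ℝ] X) : Prop := ∀ n, A n ∘L P n = P (n + 1) ∘L A n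

/-- The projectors sequence `P` is strongly invariant for the system `(A)`: it is invariant and
the restriction of `A_m^n` to `Ker P_n` is an isomorphism from `Ker P_n` onto `Ker P_m`. -/
def StronglyInvariantFor (A P : ℕ → X →L[ℝ] X) : Prop :=
  InvariantFor A P ∧ ∀ m n : ℕ, n ≤ m →
    Set.BijOn (evol A m n) (LinearMap.ker (P n : X →ₗ[ℝ] X) : Set X) (LinearMap.ker (P m : X →ₗ[ℝ] X))

/-- A growth rate: an increasing sequence with values in `[1, ∞)` tending to `∞`. -/
def IsGrowthRate (h : ℕ → ℝ) : Prop :=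
  StrictMono h ∧ (∀ n, 1 ≤ h n) ∧ Tendsto h atTop atTop

/-- The pair `(A, P)` is `(h,k)`-dichotomic. -/
def Dichotomic (A P : ℕ → X →L[ℝ] X) (h k : ℕ → ℝ) : Prop :=
  ∃ d : ℕ → ℝ, (∀ n, 1 ≤ d n) ∧ Monotone d ∧
    ∀ m n : ℕ, n ≤ m → ∀ x : X,
      h m * ‖evol A m n (P n x)‖ ≤ d n * (h n * ‖P n x‖) ∧
      k m * ‖(1 - P n) x‖ ≤ d m * (k n * ‖evol A m n ((1 - P n) x)‖)

/-- The pair `(A, P)` is uniformly `(h,k)`-dichotomic. -/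
def UniformDichotomic (A P : ℕ → X →L[ℝ] X) (h k : ℕ → ℝ) : Prop :=
  ∃ d : ℝ, 1 ≤ d ∧
    ∀ m n : ℕ, n ≤ m → ∀ x : X,
      h m * ‖evol A m n (P n x)‖ ≤ d * (h n * ‖P n x‖) ∧
      k m * ‖(1 - P n) x‖ ≤ d * (k n * ‖evol A m n ((1 - P n) x)‖)

/-- The pair `(A, P)` has `(h,k)`-growth. -/
def HasGrowth (A P : ℕ → X →L[ℝ] X) (h k : ℕ → ℝ) : Prop :=
  ∃ g : ℕ → ℝ, (∀ n, 1 ≤ g n) ∧ Monotone g ∧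
    ∀ m n : ℕ, n ≤ m → ∀ x : X,
      h n * ‖evol A m n (P n x)‖ ≤ g n * (h m * ‖P n x‖) ∧
      k n * ‖(1 - P n) x‖ ≤ g m * (k m * ‖evol A m n ((1 - P n) x)‖)

/-- `N` is a sequence of norms on `X`. -/
def IsNormSeq (N : ℕ → X → ℝ) : Prop :=
  ∀ n, (∀ x y, N n (x + y) ≤ N n x + N n y) ∧
    (∀ (a : ℝ) (x : X), N n (a • x) = |a| * N n x) ∧
    (∀ x, N n x = 0 ↔ x = 0)

/-- The sequence of norms `N` is compatible with the projectors sequence `P`. -/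
def NormsCompatible (N : ℕ → X → ℝ) (P : ℕ → X →L[ℝ] X) : Prop :=
  IsNormSeq N ∧ ∃ c : ℕ → ℝ, (∀ n, 1 ≤ c n) ∧ Monotone c ∧
    ∀ (n : ℕ) (x : X), ‖x‖ ≤ N n x ∧ N n x ≤ c n * (‖P n x‖ + ‖(1 - P n) x‖)

/-- The defining properties of the skew-evolution operator `B` associated to the pair `(A, P)`:
`A_m^n B_m^n Q_m = Q_m`, `B_m^n A_m^n Q_n = Q_n` and `B_m^n Q_m = Q_n B_m^n Q_m` for `m ≥ n`,
where `Q_n = I - P_n`. -/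
def SkewEvol (A P : ℕ → X →L[ℝ] X) (B : ℕ → ℕ → X →L[ℝ] X) : Prop :=
  ∀ m n : ℕ, n ≤ m →
    evol A m n ∘L (B m n ∘L (1 - P m)) = 1 - P m ∧
    B m n ∘L (evol A m n ∘L (1 - P n)) = 1 - P n ∧
    B m n ∘L (1 - P m) = (1 - P n) ∘L (B m n ∘L (1 - P m))

lemma evol_self (A : ℕ → X →L[ℝ] X) (n : ℕ) : evol A n n = 1 := by
  cases n <;> simp [evol]

lemma evol_succ (A : ℕ → X →L[ℝ] X) {m n : ℕ} (hmn : n ≤ m) :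
    evol A (m + 1) n = A m ∘L evol A m n := by
  simp [evol, if_neg (by omega : ¬ m + 1 ≤ n)]
  exact fun h => absurd h (by omega)

lemma evol_comm_P (A P : ℕ → X →L[ℝ] X) (hInv : InvariantFor A P) :
    ∀ m n : ℕ, n ≤ m → evol A m n ∘L P n = P m ∘L evol A m n := by
  intro m
  induction m with
  | zero => intro n hn; interval_cases n; exact (ContinuousLinearMap.id_comp _).trans (ContinuousLinearMap.comp_id _).symm
  | succ m ih =>
    intro n hn
    rcases eq_or_lt_of_le hn with rfl | hlt
    · rw [evol_self]
      exact (ContinuousLinearMap.id_comp _).trans (ContinuousLinearMap.comp_id _).symm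
    · have hn' : n ≤ m := by omega
      rw [evol_succ A hn', comp_assoc, ih n hn', ← comp_assoc, hInv m, comp_assoc]

lemma evol_q (A P : ℕ → X →L[ℝ] X) (hInv : InvariantFor A P) {m n : ℕ} (hmn : n ≤ m)
    (x : X) : evol A m n ((1 - P n) x) = (1 - P m) (evol A m n x) := by
  have h1 := DFunLike.congr_fun (evol_comm_P A P hInv m n hmn) x
  simp only [comp_apply] at h1
  simp [sub_apply, one_apply, map_sub, h1]

/-- An auxiliary monotone majorant sequence. -/
private def maxSeq (c : ℕ → ℝ) : ℕ → ℝ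
  | 0 => max 1 (c 0)
  | n + 1 => max (maxSeq c n) (c (n + 1))

private lemma one_le_maxSeq (c : ℕ → ℝ) : ∀ n, 1 ≤ maxSeq c n := by
  intro n
  induction n with
  | zero => exact le_max_left _ _
  | succ n ih => exact le_trans ih (le_max_left _ _)

private lemma le_maxSeq (c : ℕ → ℝ) : ∀ n, c n ≤ maxSeq c n := by
  intro n
  cases n with
  | zero => exact le_max_right _ _
  | succ n => exact le_max_right _ _

private lemma monotone_maxSeq (c : ℕ → ℝ) : Monotone (maxSeq c) :=
  monotone_nat_of_le_succ fun n => le_max_left _ _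

theorem stmt_2 [CompleteSpace X] (A P : ℕ → X →L[ℝ] X) (B : ℕ → ℕ → X →L[ℝ] X)
    (hP : ProjSeq P) (hSI : StronglyInvariantFor A P) (hB : SkewEvol A P B)
    (h k : ℕ → ℝ) (hh : IsGrowthRate h) (hk : IsGrowthRate k) :
    Dichotomic A P h k ↔
      ∃ s : ℕ → ℝ, (∀ n, 1 ≤ s n) ∧ Monotone s ∧
        ∀ m n : ℕ, n ≤ m → ∀ x : X,
          h m * ‖evol A m n (P n x)‖ ≤ s n * (h n * ‖x‖) ∧
          k m * ‖B m n ((1 - P m) x)‖ ≤ s m * (k n * ‖x‖) := by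
  obtain ⟨hInv, _⟩ := hSI
  have hPP : ∀ n (x : X), P n (P n x) = P n x := fun n x => by
    have := DFunLike.congr_fun (hP n) x
    simpa using this
  have hQQ : ∀ n (x : X), (1 - P n) ((1 - P n) x) = (1 - P n) x := fun n x => by
    simp [sub_apply, one_apply, map_sub, hPP n x]
  have hh0 : ∀ n, (0:ℝ) ≤ h n := fun n => le_trans zero_le_one (hh.2.1 n)
  have hk0 : ∀ n, (0:ℝ) ≤ k n := fun n => le_trans zero_le_one (hk.2.1 n)
  constructor
  · rintro ⟨d, hd1, hdmono, hd⟩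
    set c : ℕ → ℝ := fun n => ‖P n‖ + ‖(1 : X →L[ℝ] X) - P n‖ with hc
    have hc0 : ∀ n, 0 ≤ c n := fun n => add_nonneg (norm_nonneg _) (norm_nonneg _)
    refine ⟨fun n => d n * maxSeq c n, ?_, ?_, ?_⟩
    · intro n
      have := mul_le_mul (hd1 n) (one_le_maxSeq c n) zero_le_one
        (le_trans zero_le_one (hd1 n))
      simpa using this
    · intro a b hab
      exact mul_le_mul (hdmono hab) (monotone_maxSeq c hab)
        (le_trans zero_le_one (one_le_maxSeq c a)) (le_trans zero_le_one (hd1 b))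
    · intro m n hmn x
      have hM : c n ≤ maxSeq c n := le_maxSeq c n
      have hMm : c m ≤ maxSeq c m := le_maxSeq c m
      constructor
      · have h1 := (hd m n hmn x).1
        have h2 : ‖P n x‖ ≤ c n * ‖x‖ := by
          have hcn : c n = ‖P n‖ + ‖(1 : X →L[ℝ] X) - P n‖ := rfl
          have := (P n).le_opNorm x
          rw [hcn]
          nlinarith [norm_nonneg ((1 : X →L[ℝ] X) - P n), norm_nonneg x]
        calc h m * ‖evol A m n (P n x)‖ ≤ d n * (h n * ‖P n x‖) := h1
          _ ≤ d n * (h n * (c n * ‖x‖)) := by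
              apply mul_le_mul_of_nonneg_left _ (le_trans zero_le_one (hd1 n))
              exact mul_le_mul_of_nonneg_left h2 (hh0 n)
          _ = (d n * c n) * (h n * ‖x‖) := by ring
          _ ≤ (d n * maxSeq c n) * (h n * ‖x‖) := by
              apply mul_le_mul_of_nonneg_right _ (mul_nonneg (hh0 n) (norm_nonneg x))
              exact mul_le_mul_of_nonneg_left hM (le_trans zero_le_one (hd1 n))
      · -- apply second dichotomy inequality to y = B m n ((1 - P m) x)
        set y := B m n ((1 - P m) x) with hy
        have hQy : (1 - P n) y = y := by
          have := DFunLike.congr_fun (hB m n hmn).2.2 x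
          simp only [comp_apply] at this
          exact this.symm
        have hAy : evol A m n y = (1 - P m) x := by
          have := DFunLike.congr_fun (hB m n hmn).1 x
          simpa only [comp_apply] using this
        have h1 := (hd m n hmn y).2
        rw [hQy, hAy] at h1
        have h2 : ‖(1 - P m) x‖ ≤ c m * ‖x‖ := by
          have hcm : c m = ‖P m‖ + ‖(1 : X →L[ℝ] X) - P m‖ := rfl
          have := ((1 : X →L[ℝ] X) - P m).le_opNorm x
          rw [hcm]
          nlinarith [norm_nonneg (P m), norm_nonneg x]
        calc k m * ‖y‖ ≤ d m * (k n * ‖(1 - P m) x‖) := h1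
          _ ≤ d m * (k n * (c m * ‖x‖)) := by
              apply mul_le_mul_of_nonneg_left _ (le_trans zero_le_one (hd1 m))
              exact mul_le_mul_of_nonneg_left h2 (hk0 n)
          _ = (d m * c m) * (k n * ‖x‖) := by ring
          _ ≤ (d m * maxSeq c m) * (k n * ‖x‖) := by
              apply mul_le_mul_of_nonneg_right _ (mul_nonneg (hk0 n) (norm_nonneg x))
              exact mul_le_mul_of_nonneg_left hMm (le_trans zero_le_one (hd1 m))
  · rintro ⟨s, hs1, hsmono, hs⟩
    refine ⟨s, hs1, hsmono, ?_⟩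
    intro m n hmn x
    constructor
    · have h1 := (hs m n hmn (P n x)).1
      rwa [hPP n x] at h1
    · set z := evol A m n ((1 - P n) x) with hz
      have hQz : (1 - P m) z = z := by
        rw [hz, evol_q A P hInv hmn x, hQQ]
      have h1 := (hs m n hmn z).2
      rw [hQz] at h1
      have hBz : B m n z = (1 - P n) x := by
        have := DFunLike.congr_fun (hB m n hmn).2.1 x
        simpa only [comp_apply] using this
      rwa [hBz] at h1

end
end

section
/- Let X = ℝ² with norm ‖(x_1,x_2)‖ = max{|x_1|,|x_2|}, let a, h, k be growth rates, define projectors P_n(x_1,x_2) = (x_1 + a_n x_2, 0) and Q_n(x_1,x_2) = (−a_n x_2, x_2), and consider the system generated by A_n = ((1+ln a_n)/(1+ln a_{n+1}))·(((h_{n+1})/h_n) P_n + (k_n/k_{n+1}) Q_{n+1}), whose evolution operator is A_m^n = ((1+ln a_n)/(1+ln a_m))·((h_m/h_n) P_n + (k_n/k_m) Q_m). Then: (i) the pair (A,P) has (h,k)-growth with g_n = 1 + ln a_n; (ii) if moreover h_n²/(1 + ln a_n) → ∞ as n → ∞, then the pair (A,P) is not (h,k)-dichotomic. -/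
open ContinuousLinearMap Filter

noncomputable section

variable {X : Type*} [NormedAddCommGroup X] [NormedSpace ℝ X]

/-- The projection `P_n(x₁, x₂) = (x₁ + a_n x₂, 0)` on `ℝ²` with the max norm. -/
def Pj (a : ℕ → ℝ) (n : ℕ) : (ℝ × ℝ) →L[ℝ] (ℝ × ℝ) :=
  (ContinuousLinearMap.fst ℝ ℝ ℝ + a n • ContinuousLinearMap.snd ℝ ℝ ℝ).prod 0

/-- The system of Example `ex-are-crestere-nu-este-dicho`. -/
def Aop' (a h k : ℕ → ℝ) (n : ℕ) : (ℝ × ℝ) →L[ℝ] (ℝ × ℝ) :=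
  ((1 + Real.log (a n)) / (1 + Real.log (a (n + 1)))) •
    ((h (n + 1) / h n) • Pj a n + (k n / k (n + 1)) • (1 - Pj a (n + 1)))

/-- auxiliary -/
def Eop (a h k : ℕ → ℝ) (m n : ℕ) : (ℝ × ℝ) →L[ℝ] (ℝ × ℝ) :=
  ((1 + Real.log (a n)) / (1 + Real.log (a m))) •
    ((h m / h n) • Pj a n + (k n / k m) • (1 - Pj a m))

lemma pj_apply (a : ℕ → ℝ) (n : ℕ) (x : ℝ × ℝ) : Pj a n x = (x.1 + a n * x.2, 0) := by
  simp [Pj, Prod.ext_iff]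

lemma qj_apply (a : ℕ → ℝ) (n : ℕ) (x : ℝ × ℝ) : (1 - Pj a n) x = (-(a n * x.2), x.2) := by
  simp [Pj, Prod.ext_iff]

lemma norm_pair (y z : ℝ) : ‖((y, z) : ℝ × ℝ)‖ = max |y| |z| := by
  simp [Prod.norm_def, Real.norm_eq_abs]

lemma Eop_apply (a h k : ℕ → ℝ) (m n : ℕ) (x : ℝ × ℝ) :
    Eop a h k m n x =
      (((1 + Real.log (a n)) / (1 + Real.log (a m))) * ((h m / h n) * (x.1 + a n * x.2)
        - (k n / k m) * (a m * x.2)),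
       ((1 + Real.log (a n)) / (1 + Real.log (a m))) * ((k n / k m) * x.2)) := by
  simp [Eop, Pj, Prod.ext_iff]
  ring

lemma Eop_self (a h k : ℕ → ℝ) (ha : ∀ n, 1 ≤ a n) (hh : ∀ n, 1 ≤ h n) (hk : ∀ n, 1 ≤ k n)
    (n : ℕ) : Eop a h k n n = 1 := by
  have hh' : h n ≠ 0 := by have := hh n; linarith
  have hk' : k n ≠ 0 := by have := hk n; linarith
  refine ContinuousLinearMap.ext fun x => ?_
  have hla : (1 + Real.log (a n)) ≠ 0 := by
    have := Real.log_nonneg (ha n); linarith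
  rw [Eop_apply, Prod.ext_iff]
  constructor
  · simp only [ContinuousLinearMap.one_apply]
    field_simp
    try ring
  · simp only [ContinuousLinearMap.one_apply]
    field_simp
    try ring

lemma Eop_comp (a h k : ℕ → ℝ) (ha : ∀ n, 1 ≤ a n) (hh : ∀ n, 1 ≤ h n) (hk : ∀ n, 1 ≤ k n)
    (m n p : ℕ) :
    Eop a h k p m ∘L Eop a h k m n = Eop a h k p n := by
  have hlan : (1 + Real.log (a n)) ≠ 0 := by have := Real.log_nonneg (ha n); linarith
  have hlam : (1 + Real.log (a m)) ≠ 0 := by have := Real.log_nonneg (ha m); linarith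
  have hlap : (1 + Real.log (a p)) ≠ 0 := by have := Real.log_nonneg (ha p); linarith
  have hhn : h n ≠ 0 := by have := hh n; linarith
  have hhm : h m ≠ 0 := by have := hh m; linarith
  have hhp : h p ≠ 0 := by have := hh p; linarith
  have hkn : k n ≠ 0 := by have := hk n; linarith
  have hkm : k m ≠ 0 := by have := hk m; linarith
  have hkp : k p ≠ 0 := by have := hk p; linarith
  refine ContinuousLinearMap.ext fun x => ?_
  rw [ContinuousLinearMap.comp_apply, Eop_apply, Eop_apply, Eop_apply, Prod.ext_iff]
  constructor
  · simp only
    field_simp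
    try ring
  · simp only
    field_simp
    try ring

lemma evol_eq (a h k : ℕ → ℝ) (ha : ∀ n, 1 ≤ a n) (hh : ∀ n, 1 ≤ h n) (hk : ∀ n, 1 ≤ k n) :
    ∀ m n : ℕ, n ≤ m → evol (Aop' a h k) m n = Eop a h k m n := by
  intro m
  induction m with
  | zero =>
    intro n hn
    interval_cases n
    rw [Eop_self a h k ha hh hk]
    rfl
  | succ m ih =>
    intro n hn
    rcases Nat.lt_or_ge n (m + 1) with hlt | hge
    · have hnm : n ≤ m := Nat.lt_succ_iff.mp hlt
      show (if m + 1 ≤ n then 1 else Aop' a h k m ∘L evol (Aop' a h k) m n) = _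
      rw [if_neg (by omega), ih n hnm]
      have hA : Aop' a h k m = Eop a h k (m + 1) m := rfl
      rw [hA, Eop_comp a h k ha hh hk]
    · have : n = m + 1 := le_antisymm hn hge
      subst this
      show (if m + 1 ≤ m + 1 then 1 else _) = _
      rw [if_pos le_rfl, Eop_self a h k ha hh hk]

theorem stmt_10 (a h k : ℕ → ℝ)
    (ha : IsGrowthRate a) (hh : IsGrowthRate h) (hk : IsGrowthRate k) :
    (∀ m n : ℕ, n ≤ m → evol (Aop' a h k) m n =
      ((1 + Real.log (a n)) / (1 + Real.log (a m))) •
        ((h m / h n) • Pj a n + (k n / k m) • (1 - Pj a m))) ∧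
    (∀ m n : ℕ, n ≤ m → ∀ x : ℝ × ℝ,
      h n * ‖evol (Aop' a h k) m n (Pj a n x)‖ ≤
        (1 + Real.log (a n)) * (h m * ‖Pj a n x‖) ∧
      k n * ‖(1 - Pj a n) x‖ ≤
        (1 + Real.log (a m)) * (k m * ‖evol (Aop' a h k) m n ((1 - Pj a n) x)‖)) ∧
    HasGrowth (Aop' a h k) (Pj a) h k ∧
    (Tendsto (fun n => h n ^ 2 / (1 + Real.log (a n))) atTop atTop →
      ¬ Dichotomic (Aop' a h k) (Pj a) h k) := by
  obtain ⟨haM, ha1, -⟩ := ha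
  obtain ⟨hhM, hh1, -⟩ := hh
  obtain ⟨hkM, hk1, -⟩ := hk
  have hapos : ∀ n, (0:ℝ) < a n := fun n => lt_of_lt_of_le one_pos (ha1 n)
  have hhpos : ∀ n, (0:ℝ) < h n := fun n => lt_of_lt_of_le one_pos (hh1 n)
  have hkpos : ∀ n, (0:ℝ) < k n := fun n => lt_of_lt_of_le one_pos (hk1 n)
  have hL1 : ∀ n, (1:ℝ) ≤ 1 + Real.log (a n) := fun n => by
    have := Real.log_nonneg (ha1 n); linarith
  have hLpos : ∀ n, (0:ℝ) < 1 + Real.log (a n) := fun n => lt_of_lt_of_le one_pos (hL1 n)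
  have key : ∀ m n : ℕ, n ≤ m → evol (Aop' a h k) m n = Eop a h k m n :=
    evol_eq a h k ha1 hh1 hk1
  -- norm of Pj
  have normP : ∀ n x, ‖Pj a n x‖ = |x.1 + a n * x.2| := by
    intro n x
    rw [pj_apply, norm_pair]
    simp [abs_nonneg]
  have normQ : ∀ n x, ‖(1 - Pj a n) x‖ = a n * |x.2| := by
    intro n x
    rw [qj_apply, norm_pair, abs_neg, abs_mul, abs_of_pos (hapos n)]
    refine max_eq_left ?_
    nlinarith [abs_nonneg x.2, ha1 n]
  -- norm of Eop applied to P n x and Q n x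
  have normEP : ∀ m n x, ‖Eop a h k m n (Pj a n x)‖ =
      (1 + Real.log (a n)) / (1 + Real.log (a m)) * ((h m / h n) * |x.1 + a n * x.2|) := by
    intro m n x
    have e1 : Eop a h k m n (Pj a n x) =
        ((1 + Real.log (a n)) / (1 + Real.log (a m)) * ((h m / h n) * (x.1 + a n * x.2)),
         0) := by
      rw [pj_apply, Eop_apply, Prod.ext_iff]
      constructor
      · simp only
        ring
      · simp only
        ring
    rw [e1, norm_pair]
    have hc : 0 < (1 + Real.log (a n)) / (1 + Real.log (a m)) := div_pos (hLpos n) (hLpos m)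
    have hr : 0 < h m / h n := div_pos (hhpos m) (hhpos n)
    rw [abs_zero, abs_mul, abs_mul, abs_of_pos hc, abs_of_pos hr]
    exact max_eq_left (by positivity)
  have normEQ : ∀ m n x, ‖Eop a h k m n ((1 - Pj a n) x)‖ =
      (1 + Real.log (a n)) / (1 + Real.log (a m)) * ((k n / k m) * (a m * |x.2|)) := by
    intro m n x
    have e2 : Eop a h k m n ((1 - Pj a n) x) =
        (-((1 + Real.log (a n)) / (1 + Real.log (a m)) * ((k n / k m) * (a m * x.2))),
         (1 + Real.log (a n)) / (1 + Real.log (a m)) * ((k n / k m) * x.2)) := by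
      rw [qj_apply, Eop_apply, Prod.ext_iff]
      constructor
      · simp only
        ring
      · simp only
        try ring
    have hc : 0 < (1 + Real.log (a n)) / (1 + Real.log (a m)) := div_pos (hLpos n) (hLpos m)
    have hr : 0 < k n / k m := div_pos (hkpos n) (hkpos m)
    rw [e2, norm_pair]
    simp only [abs_neg, abs_mul, abs_of_pos hc, abs_of_pos hr, abs_of_pos (hapos m)]
    refine max_eq_left ?_
    have h2 : |x.2| ≤ a m * |x.2| := le_mul_of_one_le_left (abs_nonneg _) (ha1 m)
    nlinarith [mul_le_mul_of_nonneg_left h2 (mul_nonneg hc.le hr.le)]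
  -- the central inequalities
  have ineq : ∀ m n : ℕ, n ≤ m → ∀ x : ℝ × ℝ,
      h n * ‖evol (Aop' a h k) m n (Pj a n x)‖ ≤
        (1 + Real.log (a n)) * (h m * ‖Pj a n x‖) ∧
      k n * ‖(1 - Pj a n) x‖ ≤
        (1 + Real.log (a m)) * (k m * ‖evol (Aop' a h k) m n ((1 - Pj a n) x)‖) := by
    intro m n hmn x
    rw [key m n hmn, normEP, normEQ, normP, normQ]
    constructor
    · have hid : h n * ((1 + Real.log (a n)) / (1 + Real.log (a m)) *
          ((h m / h n) * |x.1 + a n * x.2|)) =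
          (1 + Real.log (a n)) / (1 + Real.log (a m)) * (h m * |x.1 + a n * x.2|) := by
        have h1 : h n ≠ 0 := (hhpos n).ne'
        field_simp
      rw [hid]
      refine mul_le_mul_of_nonneg_right ?_ (mul_nonneg (hhpos m).le (abs_nonneg _))
      exact div_le_self (hLpos n).le (hL1 m)
    · have hid : (1 + Real.log (a m)) * (k m * ((1 + Real.log (a n)) / (1 + Real.log (a m)) *
          ((k n / k m) * (a m * |x.2|)))) =
          (1 + Real.log (a n)) * (k n * (a m * |x.2|)) := by
        have h1 : k m ≠ 0 := (hkpos m).ne'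
        have h2 : (1 + Real.log (a m)) ≠ 0 := (hLpos m).ne'
        field_simp
      rw [hid]
      have ham : a n ≤ a m := haM.monotone hmn
      nlinarith [abs_nonneg x.2, hL1 n, hkpos n, hapos m, hapos n,
        mul_le_mul_of_nonneg_right ham (mul_nonneg (hkpos n).le (abs_nonneg x.2)),
        mul_nonneg (mul_nonneg (hkpos n).le (hapos m).le) (abs_nonneg x.2)]
  refine ⟨key, ineq, ?_, ?_⟩
  · -- HasGrowth
    refine ⟨fun n => 1 + Real.log (a n), hL1, ?_, fun m n hmn x =>
      ⟨(ineq m n hmn x).1, (ineq m n hmn x).2⟩⟩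
    intro i j hij
    have := Real.log_le_log (hapos i) (haM.monotone hij)
    show 1 + Real.log (a i) ≤ 1 + Real.log (a j)
    linarith
  · -- not Dichotomic
    intro htend ⟨d, hd1, hdm, hdich⟩
    obtain ⟨m, hm⟩ := (htend.eventually_ge_atTop (d 0 * h 0 ^ 2 + 1)).exists
    have hx := (hdich m 0 (Nat.zero_le m) ((0:ℝ), (1:ℝ))).1
    rw [key m 0 (Nat.zero_le m), normEP, normP] at hx
    simp only [zero_add, mul_one] at hx
    rw [abs_of_pos (hapos 0)] at hx
    -- hx : h m * ((1+log a 0)/(1+log a m) * (h m / h 0 * a 0)) ≤ d 0 * (h 0 * a 0)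
    have hx2 : h m ^ 2 * (1 + Real.log (a 0)) * a 0 ≤
        d 0 * h 0 ^ 2 * a 0 * (1 + Real.log (a m)) := by
      have hid : h m * ((1 + Real.log (a 0)) / (1 + Real.log (a m)) * (h m / h 0 * a 0)) =
          (h m ^ 2 * (1 + Real.log (a 0)) * a 0) / ((1 + Real.log (a m)) * h 0) := by
        have h1 : h 0 ≠ 0 := (hhpos 0).ne'
        have h2 : (1 + Real.log (a m)) ≠ 0 := (hLpos m).ne'
        field_simp
      rw [hid, div_le_iff₀ (mul_pos (hLpos m) (hhpos 0))] at hx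
      nlinarith [hhpos 0, hx]
    have hfin : h m ^ 2 / (1 + Real.log (a m)) ≤ d 0 * h 0 ^ 2 := by
      rw [div_le_iff₀ (hLpos m)]
      nlinarith [hx2, hapos 0, ha1 0, hL1 0, hLpos m, sq_nonneg (h m),
        mul_le_mul_of_nonneg_right (hL1 0) (mul_nonneg (sq_nonneg (h m)) (hapos 0).le)]
    linarith


end
end

section
/- Let (P_n) be strongly invariant for the system (A). The pair (A,P) is exponentially dichotomic (i.e., (h,k)-dichotomic for the rates h_m = e^{αm}, k_m = e^{βm} for some α, β > 0) if and only if there exist a sequence of norms 𝒩 = {|||·|||_n : n ∈ ℕ} compatible with (P_n), real constants α, β > 0 and a nondecreasing sequence s : ℕ → [1,∞) such that |||A_m^n P_n x|||_m ≤ s_n e^{−α(m−n)}|||x|||_n and |||B_m^n Q_m x|||_n ≤ s_m e^{−β(m−n)}|||x|||_m for all m ≥ n and all x ∈ X. -/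
open ContinuousLinearMap Filter

noncomputable section

variable {X : Type*} [NormedAddCommGroup X] [NormedSpace ℝ X]

lemma evol_proj_comm (A P : ℕ → X →L[ℝ] X) (hInv : InvariantFor A P) :
    ∀ m n, n ≤ m → ∀ x, evol A m n (P n x) = P m (evol A m n x) := by
  intro m
  induction m with
  | zero =>
    intro n hn x
    interval_cases n
    simp [evol]
  | succ m ih =>
    intro n hn x
    rcases eq_or_lt_of_le hn with h | h
    · subst h
      simp [evol]
    · have hn' : n ≤ m := Nat.lt_succ_iff.mp h
      have hif : ¬ (m + 1 ≤ n) := by omega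
      simp only [evol, if_neg hif, ContinuousLinearMap.comp_apply]
      rw [ih n hn' x]
      have := congrArg (fun T : X →L[ℝ] X => T (evol A m n x)) (hInv m)
      simpa using this

theorem stmt_14 [CompleteSpace X] (A P : ℕ → X →L[ℝ] X) (B : ℕ → ℕ → X →L[ℝ] X)
    (hP : ProjSeq P) (hSI : StronglyInvariantFor A P) (hB : SkewEvol A P B) :
    (∃ α β : ℝ, 0 < α ∧ 0 < β ∧
      Dichotomic A P (fun m => Real.exp (α * m)) (fun m => Real.exp (β * m))) ↔
      ∃ N : ℕ → X → ℝ, NormsCompatible N P ∧ ∃ α β : ℝ, 0 < α ∧ 0 < β ∧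
        ∃ s : ℕ → ℝ, (∀ n, 1 ≤ s n) ∧ Monotone s ∧
          ∀ m n : ℕ, n ≤ m → ∀ x : X,
            N m (evol A m n (P n x)) ≤ s n * (Real.exp (-α * ((m : ℝ) - n)) * N n x) ∧
            N n (B m n ((1 - P m) x)) ≤ s m * (Real.exp (-β * ((m : ℝ) - n)) * N m x) := by
  have hPx : ∀ (n : ℕ) (x : X), P n (P n x) = P n x := by
    intro n x
    have := congrArg (fun T : X →L[ℝ] X => T x) (hP n)
    simpa using this
  obtain ⟨hInv, -⟩ := hSI
  have hQev : ∀ m n, n ≤ m → ∀ x : X,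
      evol A m n ((1 - P n) x) = (1 - P m) (evol A m n x) := by
    intro m n hmn x
    simp only [ContinuousLinearMap.sub_apply, ContinuousLinearMap.one_apply, map_sub]
    rw [evol_proj_comm A P hInv m n hmn x]
  have hexpfac : ∀ (γ : ℝ) (m n : ℕ), Real.exp (γ * m) * Real.exp (-γ * ((m : ℝ) - n))
      = Real.exp (γ * n) := by
    intro γ m n
    rw [← Real.exp_add]
    congr 1
    ring
  constructor
  · rintro ⟨α, β, hα, hβ, d, hd1, hdm, hdich⟩
    refine ⟨fun n x => ‖P n x‖ + ‖(1 - P n) x‖, ?_, α, β, hα, hβ, d, hd1, hdm, ?_⟩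
    · refine ⟨?_, 1, fun _ => le_refl 1, monotone_const, ?_⟩
      · intro n
        refine ⟨?_, ?_, ?_⟩
        · intro x y
          simp only [map_add]
          have h1 := norm_add_le (P n x) (P n y)
          have h2 := norm_add_le ((1 - P n) x) ((1 - P n) y)
          linarith
        · intro a x
          simp only [map_smul, norm_smul, Real.norm_eq_abs]
          ring
        · intro x
          constructor
          · intro hx
            have hx' : ‖P n x‖ + ‖(1 - P n) x‖ = 0 := hx
            have ha := norm_nonneg (P n x)
            have hb := norm_nonneg ((1 - P n) x)
            have h1 : P n x = 0 := norm_eq_zero.mp (by linarith)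
            have h2 : (1 - P n) x = 0 := norm_eq_zero.mp (by linarith)
            have hsum : x = P n x + (1 - P n) x := by
              simp [ContinuousLinearMap.sub_apply]
            rw [h1, h2, add_zero] at hsum
            exact hsum
          · intro hx
            show ‖P n x‖ + ‖(1 - P n) x‖ = 0
            simp [hx]
      · intro n x
        constructor
        · calc ‖x‖ = ‖P n x + (1 - P n) x‖ := by
                simp [ContinuousLinearMap.sub_apply]
            _ ≤ ‖P n x‖ + ‖(1 - P n) x‖ := norm_add_le _ _
        · show ‖P n x‖ + ‖(1 - P n) x‖ ≤ 1 * (‖P n x‖ + ‖(1 - P n) x‖)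
          rw [one_mul]
    · intro m n hmn x
      constructor
      · -- first estimate
        show ‖P m (evol A m n (P n x))‖ + ‖(1 - P m) (evol A m n (P n x))‖
          ≤ d n * (Real.exp (-α * ((m : ℝ) - n)) * (‖P n x‖ + ‖(1 - P n) x‖))
        set y := evol A m n (P n x) with hy
        have hPy : P m y = y := by
          rw [hy, evol_proj_comm A P hInv m n hmn, hPx,
            ← evol_proj_comm A P hInv m n hmn]
        have hQy : (1 - P m) y = 0 := by
          simp [ContinuousLinearMap.sub_apply, hPy]
        rw [hPy, hQy, norm_zero, add_zero]
        have h1 := (hdich m n hmn x).1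
        simp only at h1
        have hem : (0:ℝ) < Real.exp (α * m) := Real.exp_pos _
        have hdn : (0:ℝ) ≤ d n := le_trans zero_le_one (hd1 n)
        have key : Real.exp (α * m) * ‖y‖
            ≤ Real.exp (α * m) * (d n * (Real.exp (-α * ((m : ℝ) - n)) * (‖P n x‖ + ‖(1 - P n) x‖))) := by
          have heq : Real.exp (α * m) * (d n * (Real.exp (-α * ((m : ℝ) - n)) * (‖P n x‖ + ‖(1 - P n) x‖)))
              = d n * (Real.exp (α * n) * (‖P n x‖ + ‖(1 - P n) x‖)) := by
            rw [show Real.exp (α * (m:ℝ)) * (d n * (Real.exp (-α * ((m : ℝ) - n)) * (‖P n x‖ + ‖(1 - P n) x‖)))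
              = d n * ((Real.exp (α * (m:ℝ)) * Real.exp (-α * ((m : ℝ) - n))) * (‖P n x‖ + ‖(1 - P n) x‖)) by ring,
              hexpfac α m n]
          rw [heq]
          calc Real.exp (α * m) * ‖y‖ ≤ d n * (Real.exp (α * n) * ‖P n x‖) := h1
            _ ≤ d n * (Real.exp (α * n) * (‖P n x‖ + ‖(1 - P n) x‖)) :=
                mul_le_mul_of_nonneg_left
                  (mul_le_mul_of_nonneg_left (le_add_of_nonneg_right (norm_nonneg _))
                    (le_of_lt (Real.exp_pos _))) hdn
        exact le_of_mul_le_mul_left key hem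
      · -- second estimate
        show ‖P n (B m n ((1 - P m) x))‖ + ‖(1 - P n) (B m n ((1 - P m) x))‖
          ≤ d m * (Real.exp (-β * ((m : ℝ) - n)) * (‖P m x‖ + ‖(1 - P m) x‖))
        set y := B m n ((1 - P m) x) with hy
        have hB3 := congrArg (fun T : X →L[ℝ] X => T x) (hB m n hmn).2.2
        simp only [ContinuousLinearMap.comp_apply] at hB3
        have hQny : (1 - P n) y = y := by
          rw [hy, hB3]
          simp only [ContinuousLinearMap.sub_apply, ContinuousLinearMap.one_apply, map_sub, hPx]
          abel
        have hPny : P n y = 0 := by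
          have h0 : P n ((1 - P n) y) = 0 := by
            simp [ContinuousLinearMap.sub_apply, hPx]
          rwa [hQny] at h0
        rw [hPny, hQny, norm_zero, zero_add]
        have hev : evol A m n y = (1 - P m) x := by
          have h := congrArg (fun T : X →L[ℝ] X => T x) (hB m n hmn).1
          simp only [ContinuousLinearMap.comp_apply] at h
          rw [hy]
          exact h
        have h2 := (hdich m n hmn y).2
        simp only at h2
        rw [hQny, hev] at h2
        have hem : (0:ℝ) < Real.exp (β * m) := Real.exp_pos _
        have hdm' : (0:ℝ) ≤ d m := le_trans zero_le_one (hd1 m)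
        have key : Real.exp (β * m) * ‖y‖
            ≤ Real.exp (β * m) * (d m * (Real.exp (-β * ((m : ℝ) - n)) * (‖P m x‖ + ‖(1 - P m) x‖))) := by
          have heq : Real.exp (β * m) * (d m * (Real.exp (-β * ((m : ℝ) - n)) * (‖P m x‖ + ‖(1 - P m) x‖)))
              = d m * (Real.exp (β * n) * (‖P m x‖ + ‖(1 - P m) x‖)) := by
            rw [show Real.exp (β * (m:ℝ)) * (d m * (Real.exp (-β * ((m : ℝ) - n)) * (‖P m x‖ + ‖(1 - P m) x‖)))
              = d m * ((Real.exp (β * (m:ℝ)) * Real.exp (-β * ((m : ℝ) - n))) * (‖P m x‖ + ‖(1 - P m) x‖)) by ring,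
              hexpfac β m n]
          rw [heq]
          calc Real.exp (β * m) * ‖y‖ ≤ d m * (Real.exp (β * n) * ‖(1 - P m) x‖) := h2
            _ ≤ d m * (Real.exp (β * n) * (‖P m x‖ + ‖(1 - P m) x‖)) :=
                mul_le_mul_of_nonneg_left
                  (mul_le_mul_of_nonneg_left (le_add_of_nonneg_left (norm_nonneg _))
                    (le_of_lt (Real.exp_pos _))) hdm'
        exact le_of_mul_le_mul_left key hem
  · rintro ⟨N, ⟨hNS, c, hc1, hcm, hcomp⟩, α, β, hα, hβ, s, hs1, hsm, hest⟩
    refine ⟨α, β, hα, hβ, fun n => s n * c n, ?_, ?_, ?_⟩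
    · intro n
      exact one_le_mul_of_one_le_of_one_le (hs1 n) (hc1 n)
    · exact hsm.mul hcm (fun n => le_trans zero_le_one (hs1 n)) (fun n => le_trans zero_le_one (hc1 n))
    · intro m n hmn x
      simp only
      constructor
      · have h1 := (hest m n hmn (P n x)).1
        rw [hPx] at h1
        have hNn : N n (P n x) ≤ c n * ‖P n x‖ := by
          have hle := (hcomp n (P n x)).2
          have hz : (1 - P n) (P n x) = 0 := by
            simp [ContinuousLinearMap.sub_apply, hPx]
          rwa [hz, norm_zero, add_zero, hPx] at hle
        have hnorm : ‖evol A m n (P n x)‖ ≤ N m (evol A m n (P n x)) :=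
          (hcomp m (evol A m n (P n x))).1
        have hsn : (0:ℝ) ≤ s n := le_trans zero_le_one (hs1 n)
        have chain : ‖evol A m n (P n x)‖ ≤ s n * (Real.exp (-α * ((m:ℝ) - n)) * (c n * ‖P n x‖)) := by
          calc ‖evol A m n (P n x)‖ ≤ N m (evol A m n (P n x)) := hnorm
            _ ≤ s n * (Real.exp (-α * ((m:ℝ) - n)) * N n (P n x)) := h1
            _ ≤ s n * (Real.exp (-α * ((m:ℝ) - n)) * (c n * ‖P n x‖)) :=
                mul_le_mul_of_nonneg_left
                  (mul_le_mul_of_nonneg_left hNn (le_of_lt (Real.exp_pos _))) hsn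
        calc Real.exp (α * m) * ‖evol A m n (P n x)‖
            ≤ Real.exp (α * m) * (s n * (Real.exp (-α * ((m:ℝ) - n)) * (c n * ‖P n x‖))) :=
              mul_le_mul_of_nonneg_left chain (le_of_lt (Real.exp_pos _))
          _ = s n * c n * ((Real.exp (α * m) * Real.exp (-α * ((m:ℝ) - n))) * ‖P n x‖) := by ring
          _ = s n * c n * (Real.exp (α * n) * ‖P n x‖) := by rw [hexpfac α m n]
      · set y := evol A m n ((1 - P n) x) with hy
        have hQmy : (1 - P m) y = y := by
          rw [hy, hQev m n hmn]
          simp only [ContinuousLinearMap.sub_apply, ContinuousLinearMap.one_apply, map_sub, hPx]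
          abel
        have hPmy : P m y = 0 := by
          have h0 : P m ((1 - P m) y) = 0 := by
            simp [ContinuousLinearMap.sub_apply, hPx]
          rwa [hQmy] at h0
        have hBy : B m n ((1 - P m) y) = (1 - P n) x := by
          rw [hQmy, hy]
          have h := congrArg (fun T : X →L[ℝ] X => T x) (hB m n hmn).2.1
          simp only [ContinuousLinearMap.comp_apply] at h
          exact h
        have h2 := (hest m n hmn y).2
        rw [hBy] at h2
        have hNm : N m y ≤ c m * ‖y‖ := by
          have hle := (hcomp m y).2
          rwa [hPmy, norm_zero, hQmy, zero_add] at hle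
        have hnorm : ‖(1 - P n) x‖ ≤ N n ((1 - P n) x) := (hcomp n ((1 - P n) x)).1
        have hsm' : (0:ℝ) ≤ s m := le_trans zero_le_one (hs1 m)
        have chain : ‖(1 - P n) x‖ ≤ s m * (Real.exp (-β * ((m:ℝ) - n)) * (c m * ‖y‖)) := by
          calc ‖(1 - P n) x‖ ≤ N n ((1 - P n) x) := hnorm
            _ ≤ s m * (Real.exp (-β * ((m:ℝ) - n)) * N m y) := h2
            _ ≤ s m * (Real.exp (-β * ((m:ℝ) - n)) * (c m * ‖y‖)) :=
                mul_le_mul_of_nonneg_left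
                  (mul_le_mul_of_nonneg_left hNm (le_of_lt (Real.exp_pos _))) hsm'
        calc Real.exp (β * m) * ‖(1 - P n) x‖
            ≤ Real.exp (β * m) * (s m * (Real.exp (-β * ((m:ℝ) - n)) * (c m * ‖y‖))) :=
              mul_le_mul_of_nonneg_left chain (le_of_lt (Real.exp_pos _))
          _ = s m * c m * ((Real.exp (β * m) * Real.exp (-β * ((m:ℝ) - n))) * ‖y‖) := by ring
          _ = s m * c m * (Real.exp (β * n) * ‖y‖) := by rw [hexpfac β m n]

end
end

section
/- Let (P_n) be strongly invariant for the system (A) and let h, k be growth rates. If there exist a sequence of norms 𝒩 = {|||·|||_n : n ∈ ℕ} compatible with (P_n) and a nondecreasing sequence d : ℕ → [1,∞) such that Σ_{j=n}^{m} h_j|||A_j^n P_n x|||_j ≤ d_n h_n|||x|||_n and Σ_{j=n}^{m} k_j|||B_j^n Q_j x|||_n ≤ d_m k_n|||x|||_m for all m ≥ n and all x ∈ X, then the pair (A,P) is (h,k)-dichotomic. -/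
open ContinuousLinearMap Filter

noncomputable section

variable {X : Type*} [NormedAddCommGroup X] [NormedSpace ℝ X]

lemma evol_comm (A P : ℕ → X →L[ℝ] X) (hI : InvariantFor A P) :
    ∀ m n : ℕ, n ≤ m → ∀ x, evol A m n (P n x) = P m (evol A m n x) := by
  intro m
  induction m with
  | zero => intro n hn x; interval_cases n; simp [evol]
  | succ m ih =>
    intro n hn x
    by_cases hnm : m + 1 ≤ n
    · have hEq : n = m + 1 := le_antisymm hn hnm
      subst hEq; simp [evol]
    · push_neg at hnm
      have hn' : n ≤ m := Nat.lt_succ_iff.mp hnm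
      have h1 : evol A (m+1) n = A m ∘L evol A m n := by
        simp [evol, Nat.not_le.mpr hnm]
      rw [h1]
      simp only [ContinuousLinearMap.comp_apply]
      rw [ih n hn' x]
      have := congrArg (fun T : X →L[ℝ] X => T (evol A m n x)) (hI m)
      simpa using this

theorem stmt_18 [CompleteSpace X] (A P : ℕ → X →L[ℝ] X) (B : ℕ → ℕ → X →L[ℝ] X)
    (hP : ProjSeq P) (hSI : StronglyInvariantFor A P) (hB : SkewEvol A P B)
    (h k : ℕ → ℝ) (hh : IsGrowthRate h) (hk : IsGrowthRate k)
    (hyp : ∃ N : ℕ → X → ℝ, NormsCompatible N P ∧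
      ∃ d : ℕ → ℝ, (∀ n, 1 ≤ d n) ∧ Monotone d ∧
        ∀ m n : ℕ, n ≤ m → ∀ x : X,
          (∑ j ∈ Finset.Icc n m, h j * N j (evol A j n (P n x))) ≤
            d n * (h n * N n x) ∧
          (∑ j ∈ Finset.Icc n m, k j * N n (B j n ((1 - P j) x))) ≤
            d m * (k n * N m x)) :
    Dichotomic A P h k := by
  obtain ⟨N, ⟨hNseq, c, hc1, hcmono, hcineq⟩, d, hd1, hdmono, hineq⟩ := hyp
  have hNnonneg : ∀ n x, 0 ≤ N n x := fun n x => le_trans (norm_nonneg x) (hcineq n x).1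
  have hh1 := hh.2.1
  have hk1 := hk.2.1
  have hinv := hSI.1
  refine ⟨fun n => c n * d n, fun n => ?_, ?_, ?_⟩
  · exact le_trans (hc1 n) (le_mul_of_one_le_right (le_trans zero_le_one (hc1 n)) (hd1 n))
  · intro a b hab
    have := mul_le_mul (hcmono hab) (hdmono hab) (by linarith [hd1 a]) (by linarith [hc1 b])
    exact this
  intro m n hmn x
  have hmem : m ∈ Finset.Icc n m := Finset.mem_Icc.mpr ⟨hmn, le_rfl⟩
  constructor
  · have hPP : P n (P n x) = P n x := by
      have := congrArg (fun T : X →L[ℝ] X => T x) (hP n)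
      simpa using this
    have hsum := (hineq m n hmn (P n x)).1
    have hterm : h m * N m (evol A m n (P n (P n x))) ≤
        ∑ j ∈ Finset.Icc n m, h j * N j (evol A j n (P n (P n x))) :=
      Finset.single_le_sum (f := fun j => h j * N j (evol A j n (P n (P n x))))
        (fun j _ => mul_nonneg (by linarith [hh1 j]) (hNnonneg _ _)) hmem
    rw [hPP] at hterm hsum
    have h1 : h m * ‖evol A m n (P n x)‖ ≤ h m * N m (evol A m n (P n x)) :=
      mul_le_mul_of_nonneg_left (hcineq m _).1 (by linarith [hh1 m])
    have hQ0 : (1 - P n) (P n x) = 0 := by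
      simp [ContinuousLinearMap.sub_apply, hPP]
    have h2 : N n (P n x) ≤ c n * ‖P n x‖ := by
      have := (hcineq n (P n x)).2
      rw [hPP, hQ0] at this
      simpa using this
    calc h m * ‖evol A m n (P n x)‖ ≤ h m * N m (evol A m n (P n x)) := h1
      _ ≤ ∑ j ∈ Finset.Icc n m, h j * N j (evol A j n (P n x)) := hterm
      _ ≤ d n * (h n * N n (P n x)) := hsum
      _ ≤ d n * (h n * (c n * ‖P n x‖)) := by
          apply mul_le_mul_of_nonneg_left
            (mul_le_mul_of_nonneg_left h2 (by linarith [hh1 n])) (by linarith [hd1 n])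
      _ = c n * d n * (h n * ‖P n x‖) := by ring
  · set y := evol A m n ((1 - P n) x) with hy
    have hQQ : P n ((1 - P n) x) = 0 := by
      have := congrArg (fun T : X →L[ℝ] X => T x) (hP n)
      simp only [ContinuousLinearMap.comp_apply] at this
      simp [ContinuousLinearMap.sub_apply, map_sub, this]
    have hPy : P m y = 0 := by
      rw [hy, ← evol_comm A P hinv m n hmn, hQQ, map_zero]
    have hQy : (1 - P m) y = y := by
      simp [ContinuousLinearMap.sub_apply, hPy]
    have hBy : B m n y = (1 - P n) x := by
      have := congrArg (fun T : X →L[ℝ] X => T x) (hB m n hmn).2.1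
      simp only [ContinuousLinearMap.comp_apply] at this
      rw [← hy] at this
      exact this
    have hsum := (hineq m n hmn y).2
    have hterm : k m * N n (B m n ((1 - P m) y)) ≤
        ∑ j ∈ Finset.Icc n m, k j * N n (B j n ((1 - P j) y)) :=
      Finset.single_le_sum (f := fun j => k j * N n (B j n ((1 - P j) y)))
        (fun j _ => mul_nonneg (by linarith [hk1 j]) (hNnonneg _ _)) hmem
    rw [hQy, hBy] at hterm
    have h1 : k m * ‖(1 - P n) x‖ ≤ k m * N n ((1 - P n) x) :=
      mul_le_mul_of_nonneg_left (hcineq n _).1 (by linarith [hk1 m])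
    have h2 : N m y ≤ c m * ‖y‖ := by
      have := (hcineq m y).2
      rw [hPy, hQy] at this
      simpa using this
    calc k m * ‖(1 - P n) x‖ ≤ k m * N n ((1 - P n) x) := h1
      _ ≤ ∑ j ∈ Finset.Icc n m, k j * N n (B j n ((1 - P j) y)) := hterm
      _ ≤ d m * (k n * N m y) := hsum
      _ ≤ d m * (k n * (c m * ‖y‖)) := by
          apply mul_le_mul_of_nonneg_left
            (mul_le_mul_of_nonneg_left h2 (by linarith [hk1 n])) (by linarith [hd1 m])
      _ = c m * d m * (k n * ‖y‖) := by ring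


end
end
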